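/- arXiv:2302.07469 — 2 statements merged into one kernel-verified Lean document; each statement's English description precedes it below -/
import Mathlib

section
/- Suppose a real random sequence (h_k) adapted to a Markov chain satisfies E[h_{k+1} | x_k] ≥ α h_k + δ almost surely, with α ∈ (0,1), h_k ≤ M a.s. for all k, and δ ≤ M(1−α). Set φ = M(1−α) − δ ≥ 0 and fix θ ∈ (1, 1/α]. Then W_k = (M − h_k)θ^k + φ Σ_{i=k+1}^{K} θ^i is a nonnegative supermartingale for k ∈ {0,…,K}: W_k ≥ 0 and E[W_{k+1} | x_{0:k}] ≤ W_k. -/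
open MeasureTheory in
/-- the scaled-and-shifted barrier process W is a nonnegative supermartingale. -/
theorem W_supermartingale {n : ℕ} {Ω : Type*} {m0 : MeasurableSpace Ω} {μ : Measure Ω}
    [IsProbabilityMeasure μ] (ℱ : Filtration ℕ m0)
    (x : ℕ → Ω → (Fin n → ℝ)) (hfun : (Fin n → ℝ) → ℝ)
    (hadapted : Adapted ℱ (fun k ω => hfun (x k ω)))
    (hint : ∀ k, Integrable (fun ω => hfun (x k ω)) μ)
    (α δ M : ℝ) (hα : α ∈ Set.Ioo (0 : ℝ) 1) (hM : 0 < M)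
    (hbdd : ∀ k, ∀ᵐ ω ∂μ, hfun (x k ω) ≤ M)
    (hδ : δ ≤ M * (1 - α))
    (hcond : ∀ k, (fun ω => α * hfun (x k ω) + δ) ≤ᵐ[μ] μ[fun ω => hfun (x (k + 1) ω)|ℱ k])
    (φ : ℝ) (hφ : φ = M * (1 - α) - δ)
    (θ : ℝ) (hθ : θ ∈ Set.Ioc (1 : ℝ) (1 / α)) (K : ℕ)
    (W : ℕ → Ω → ℝ)
    (hW : ∀ k ω, W k ω = (M - hfun (x k ω)) * θ ^ k + φ * ∑ i ∈ Finset.Icc (k + 1) K, θ ^ i) :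
    (0 ≤ φ) ∧ (∀ k ≤ K, ∀ᵐ ω ∂μ, 0 ≤ W k ω) ∧
    (∀ k < K, μ[W (k + 1)|ℱ k] ≤ᵐ[μ] W k) := by
  obtain ⟨hα0, hα1⟩ := hα
  obtain ⟨hθ1, hθα⟩ := hθ
  have hθ0 : 0 < θ := lt_trans one_pos hθ1
  have hφ0 : 0 ≤ φ := by rw [hφ]; linarith
  have hαθ : α * θ ≤ 1 := by
    rw [le_div_iff₀ hα0] at hθα; linarith [hθα]
  refine ⟨hφ0, ?_, ?_⟩
  · intro k _
    filter_upwards [hbdd k] with ω hb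
    rw [hW]
    have h1 : 0 ≤ (M - hfun (x k ω)) * θ ^ k :=
      mul_nonneg (by linarith) (pow_nonneg hθ0.le k)
    have h2 : 0 ≤ ∑ i ∈ Finset.Icc (k + 1) K, θ ^ i :=
      Finset.sum_nonneg fun i _ => pow_nonneg hθ0.le i
    nlinarith
  · intro k hk
    set c : ℝ := φ * ∑ i ∈ Finset.Icc (k + 2) K, θ ^ i with hc
    have hWk1 : W (k + 1) = fun ω =>
        (M * θ ^ (k + 1) + c) + (-θ ^ (k + 1)) • hfun (x (k + 1) ω) := by
      funext ω; rw [hW]; simp [smul_eq_mul]; ring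
    have hce : μ[W (k + 1)|ℱ k] =ᵐ[μ]
        fun ω => (M * θ ^ (k + 1) + c) +
          (-θ ^ (k + 1)) • (μ[fun ω => hfun (x (k + 1) ω)|ℱ k]) ω := by
      rw [hWk1]
      refine (condExp_add (m := ℱ k) (integrable_const _) ((hint (k + 1)).smul ((-θ ^ (k + 1)) : ℝ))).trans ?_
      have hcc := condExp_const (μ := μ) (ℱ.le k) (M * θ ^ (k + 1) + c)
      filter_upwards [condExp_smul (μ := μ) (m := ℱ k) (-θ ^ (k + 1))
          (fun ω => hfun (x (k + 1) ω))] with ω h2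
      simp only [Pi.add_apply, hcc, h2, Pi.smul_apply]
    have hsum : ∑ i ∈ Finset.Icc (k + 1) K, θ ^ i
        = θ ^ (k + 1) + ∑ i ∈ Finset.Icc (k + 2) K, θ ^ i := by
      have hins : Finset.Icc (k + 1) K = insert (k + 1) (Finset.Icc (k + 2) K) := by
        ext i; simp only [Finset.mem_Icc, Finset.mem_insert]; omega
      rw [hins, Finset.sum_insert (by simp)]
    filter_upwards [hce, hcond k, hbdd k] with ω h1 h2 h3
    rw [h1, hW, hsum, smul_eq_mul]
    have key : α * hfun (x k ω) + δ ≤ (μ[fun ω => hfun (x (k + 1) ω)|ℱ k]) ω := h2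
    have hp : (0:ℝ) < θ ^ (k + 1) := pow_pos hθ0 _
    have hstep : θ ^ (k + 1) * (α * (M - hfun (x k ω)))
        ≤ θ ^ k * (M - hfun (x k ω)) := by
      rw [pow_succ]
      have h0 : (0:ℝ) ≤ θ ^ k := pow_nonneg hθ0.le k
      nlinarith [mul_nonneg h0 (sub_nonneg.mpr h3),
        mul_nonneg (sub_nonneg.mpr hαθ) (mul_nonneg h0 (sub_nonneg.mpr h3))]
    nlinarith [mul_le_mul_of_nonneg_left key hp.le]
end

section
/- Let x_{k+1} = A x_k + B u_k + d with d ~ N(0, Q) a Gaussian vector, h(x) = −max_i (c_iᵀx − w_i), μ_i = c_iᵀ(A x_k + B u_k) − w_i, and σ_i = c_iᵀ Q c_i. Then for every t > 0, −E[h(x_{k+1})] ≤ (1/t) log(Σ_{i=1}^{n_c} exp(t μ_i + (t²/2) σ_i)). -/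
open MeasureTheory ProbabilityTheory Real
open scoped NNReal ENNReal

lemma gauss_exp_key (v : ℝ≥0) (t : ℝ) :
    Integrable (fun x => Real.exp (t * x)) (gaussianReal 0 v) ∧
    ∫ x, Real.exp (t * x) ∂(gaussianReal 0 v) = Real.exp ((v : ℝ) * t ^ 2 / 2) := by
  by_cases hv : v = 0
  · subst hv
    rw [gaussianReal_zero_var]
    constructor
    · exact (integrable_const (Real.exp (t * 0))).congr (ae_eq_dirac (fun x => Real.exp (t * x))).symm
    · simp [integral_dirac]
  · have hv' : (0 : ℝ) < (v : ℝ) := by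
      exact_mod_cast pos_iff_ne_zero.mpr hv
    have hpt : ∀ x : ℝ, Real.exp (t * x) * gaussianPDFReal 0 v x
        = Real.exp ((v : ℝ) * t ^ 2 / 2) * gaussianPDFReal ((v : ℝ) * t) v x := by
      intro x
      simp only [gaussianPDFReal]
      rw [mul_left_comm, mul_left_comm (Real.exp ((v : ℝ) * t ^ 2 / 2)), ← Real.exp_add,
        ← Real.exp_add]
      congr 2
      field_simp
      ring
    have hmeas : Measurable fun x => (gaussianPDFReal 0 v x).toNNReal :=
      (measurable_gaussianPDFReal 0 v).real_toNNReal
    have hrw : gaussianReal 0 v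
        = volume.withDensity (fun x => ((gaussianPDFReal 0 v x).toNNReal : ℝ≥0∞)) := by
      rw [gaussianReal_of_var_ne_zero 0 hv]; rfl
    have hsmul : ∀ x : ℝ, (gaussianPDFReal 0 v x).toNNReal • Real.exp (t * x)
        = Real.exp ((v : ℝ) * t ^ 2 / 2) * gaussianPDFReal ((v : ℝ) * t) v x := by
      intro x
      have hco : ((gaussianPDFReal 0 v x).toNNReal : ℝ) = gaussianPDFReal 0 v x :=
        Real.coe_toNNReal _ (gaussianPDFReal_nonneg 0 v x)
      rw [NNReal.smul_def, hco, smul_eq_mul, mul_comm (gaussianPDFReal 0 v x), hpt x]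
    have hint2 : Integrable (fun x => (gaussianPDFReal 0 v x).toNNReal • Real.exp (t * x))
        volume := by
      have h1 : Integrable (fun x => Real.exp ((v : ℝ) * t ^ 2 / 2)
          * gaussianPDFReal ((v : ℝ) * t) v x) volume :=
        (integrable_gaussianPDFReal _ v).const_mul _
      exact h1.congr (Filter.Eventually.of_forall fun x => (hsmul x).symm)
    constructor
    · rw [hrw, integrable_withDensity_iff_integrable_smul hmeas]
      exact hint2
    · rw [hrw, integral_withDensity_eq_integral_smul hmeas]
      calc ∫ x, (gaussianPDFReal 0 v x).toNNReal • Real.exp (t * x)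
          = ∫ x, Real.exp ((v : ℝ) * t ^ 2 / 2) * gaussianPDFReal ((v : ℝ) * t) v x :=
            integral_congr_ae (Filter.Eventually.of_forall hsmul)
        _ = Real.exp ((v : ℝ) * t ^ 2 / 2) := by
            rw [integral_const_mul, integral_gaussianPDFReal_eq_one _ hv, mul_one]

lemma gauss_id_int (v : ℝ≥0) : Integrable (fun x : ℝ => x) (gaussianReal 0 v) := by
  have h1 := (gauss_exp_key v 1).1
  have h2 := (gauss_exp_key v (-1)).1
  refine (h1.add h2).mono measurable_id.aestronglyMeasurable
    (Filter.Eventually.of_forall fun x => ?_)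
  simp only [Real.norm_eq_abs, one_mul, neg_one_mul]
  have hb : |x| ≤ Real.exp x + Real.exp (-x) := by
    rcases abs_cases x with ⟨h, _⟩ | ⟨h, _⟩
    · rw [h]
      nlinarith [Real.add_one_le_exp x, Real.exp_pos (-x)]
    · rw [h]
      nlinarith [Real.add_one_le_exp (-x), Real.exp_pos x]
  refine hb.trans (le_abs_self _)

open MeasureTheory ProbabilityTheory Matrix Finset in
/-- log-sum-exp bound on the expected polytopic barrier under
    linear-Gaussian dynamics.  The Gaussian vector d ~ N(0, Q) is characterized by the
    law of each linear functional v ⬝ d being N(0, vᵀQv). -/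
theorem polytope_barrier_bound {n m nc : ℕ} (hnc : 0 < nc)
    {Ω : Type*} [MeasurableSpace Ω] (μ : Measure Ω) [IsProbabilityMeasure μ]
    (A : Matrix (Fin n) (Fin n) ℝ) (B : Matrix (Fin n) (Fin m) ℝ)
    (Q : Matrix (Fin n) (Fin n) ℝ) (hQ : Q.PosSemidef)
    (d : Ω → (Fin n → ℝ)) (hdmeas : Measurable d)
    (hgauss : ∀ v : Fin n → ℝ,
      Measure.map (fun ω => v ⬝ᵥ d ω) μ = gaussianReal 0 (Real.toNNReal (v ⬝ᵥ Q.mulVec v)))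
    (C : Matrix (Fin nc) (Fin n) ℝ) (w : Fin nc → ℝ)
    (h : (Fin n → ℝ) → ℝ)
    (hh : ∀ y, h y = -(univ.sup' (univ_nonempty_iff.mpr (Fin.pos_iff_nonempty.mp hnc))
        (fun i => C i ⬝ᵥ y - w i)))
    (xk : Fin n → ℝ) (u : Fin m → ℝ)
    (xnext : Ω → (Fin n → ℝ)) (hxnext : ∀ ω, xnext ω = A.mulVec xk + B.mulVec u + d ω)
    (mu : Fin nc → ℝ) (hmu : ∀ i, mu i = C i ⬝ᵥ (A.mulVec xk + B.mulVec u) - w i)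
    (sig : Fin nc → ℝ) (hsig : ∀ i, sig i = C i ⬝ᵥ Q.mulVec (C i))
    (t : ℝ) (ht : 0 < t) :
    -(∫ ω, h (xnext ω) ∂μ)
      ≤ (1 / t) * Real.log (∑ i, Real.exp (t * mu i + t ^ 2 / 2 * sig i)) := by
  have hne : (univ : Finset (Fin nc)).Nonempty :=
    univ_nonempty_iff.mpr (Fin.pos_iff_nonempty.mp hnc)
  set X : Fin nc → Ω → ℝ := fun i ω => C i ⬝ᵥ d ω with hX
  have hXmeas : ∀ i, Measurable (X i) := by
    intro i
    simp only [hX, dotProduct]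
    exact Finset.univ.measurable_sum fun j _ =>
      measurable_const.mul ((measurable_pi_apply j).comp hdmeas)
  have hσ : ∀ i, 0 ≤ sig i := by
    intro i
    rw [hsig]
    simpa using hQ.dotProduct_mulVec_nonneg (C i)
  have hcoe : ∀ i, ((Real.toNNReal (C i ⬝ᵥ Q.mulVec (C i))) : ℝ) = sig i := by
    intro i
    have h0 : 0 ≤ C i ⬝ᵥ Q.mulVec (C i) := by rw [← hsig i]; exact hσ i
    rw [hsig i]
    exact Real.coe_toNNReal _ h0
  -- transfer the gaussian facts through the map
  have key : ∀ (i : Fin nc) (s : ℝ),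
      Integrable (fun ω => Real.exp (s * X i ω)) μ ∧
      ∫ ω, Real.exp (s * X i ω) ∂μ = Real.exp (sig i * s ^ 2 / 2) := by
    intro i s
    have hf := gauss_exp_key (Real.toNNReal (C i ⬝ᵥ Q.mulVec (C i))) s
    have hmap := hgauss (C i)
    have hasm : AEStronglyMeasurable (fun x : ℝ => Real.exp (s * x))
        (Measure.map (X i) μ) :=
      (Real.continuous_exp.comp (continuous_const.mul continuous_id)).aestronglyMeasurable
    constructor
    · have h1 : Integrable (fun x : ℝ => Real.exp (s * x)) (Measure.map (X i) μ) := by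
        rw [hX, hmap]; exact hf.1
      exact (integrable_map_measure hasm (hXmeas i).aemeasurable).mp h1
    · have h2 : ∫ ω, Real.exp (s * X i ω) ∂μ
          = ∫ x, Real.exp (s * x) ∂(Measure.map (X i) μ) :=
        (integral_map (hXmeas i).aemeasurable hasm).symm
      rw [h2, hX, hmap, hf.2, hcoe i]
  have keyX : ∀ i, Integrable (X i) μ := by
    intro i
    have hid := gauss_id_int (Real.toNNReal (C i ⬝ᵥ Q.mulVec (C i)))
    have h1 : Integrable (fun x : ℝ => x) (Measure.map (X i) μ) := by
      rw [hX, hgauss (C i)]; exact hid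
    exact (integrable_map_measure continuous_id.aestronglyMeasurable
      (hXmeas i).aemeasurable).mp h1
  -- the functions r i and their sup
  have hr : ∀ (i : Fin nc) (ω : Ω), C i ⬝ᵥ xnext ω - w i = mu i + X i ω := by
    intro i ω
    rw [hxnext ω, hmu i, hX]
    simp [dotProduct_add]
    ring
  set F : Ω → ℝ := fun ω => univ.sup' hne (fun i => mu i + X i ω) with hF
  have hLHS : -(∫ ω, h (xnext ω) ∂μ) = ∫ ω, F ω ∂μ := by
    rw [← integral_neg]
    refine integral_congr_ae (Filter.Eventually.of_forall fun ω => ?_)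
    show -h (xnext ω) = F ω
    rw [hh (xnext ω), neg_neg, hF]
    exact Finset.sup'_congr hne rfl fun i _ => hr i ω
  set S : ℝ := ∑ i, Real.exp (t * mu i + t ^ 2 / 2 * sig i) with hS
  have hSpos : 0 < S := Finset.sum_pos (fun i _ => Real.exp_pos _) hne
  -- integrability and value of the sum of exponentials
  have hexp_eq : ∀ (i : Fin nc) (ω : Ω),
      Real.exp (t * (mu i + X i ω)) = Real.exp (t * mu i) * Real.exp (t * X i ω) := by
    intro i ω
    rw [← Real.exp_add]
    ring_nf
  have hint_i : ∀ i : Fin nc, Integrable (fun ω => Real.exp (t * (mu i + X i ω))) μ := by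
    intro i
    refine (((key i t).1.const_mul (Real.exp (t * mu i))).congr
      (Filter.Eventually.of_forall fun ω => ?_))
    exact (hexp_eq i ω).symm
  have hintsum : Integrable (fun ω => ∑ i, Real.exp (t * (mu i + X i ω))) μ :=
    integrable_finset_sum _ fun i _ => hint_i i
  have hintegralsum : ∫ ω, (∑ i, Real.exp (t * (mu i + X i ω))) ∂μ = S := by
    rw [integral_finset_sum _ fun i _ => hint_i i, hS]
    refine Finset.sum_congr rfl fun i _ => ?_
    calc ∫ ω, Real.exp (t * (mu i + X i ω)) ∂μ
        = ∫ ω, Real.exp (t * mu i) * Real.exp (t * X i ω) ∂μ :=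
          integral_congr_ae (Filter.Eventually.of_forall fun ω => hexp_eq i ω)
      _ = Real.exp (t * mu i) * ∫ ω, Real.exp (t * X i ω) ∂μ := integral_const_mul _ _
      _ = Real.exp (t * mu i) * Real.exp (sig i * t ^ 2 / 2) := by rw [(key i t).2]
      _ = Real.exp (t * mu i + t ^ 2 / 2 * sig i) := by rw [← Real.exp_add]; ring_nf
  -- integrability of F
  have hFmeas : Measurable F := by
    have hFe : F = univ.sup' hne (fun i => fun ω => mu i + X i ω) := by
      funext ω; rw [Finset.sup'_apply]
    rw [hFe]
    exact Finset.measurable_sup' hne fun i _ => measurable_const.add (hXmeas i)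
  have hFint : Integrable F μ := by
    have hG : Integrable (fun ω => ∑ i, |mu i + X i ω|) μ :=
      integrable_finset_sum _ fun i _ =>
        (Integrable.add (integrable_const (mu i)) (keyX i)).abs
    refine hG.mono hFmeas.aestronglyMeasurable (Filter.Eventually.of_forall fun ω => ?_)
    simp only [Real.norm_eq_abs]
    obtain ⟨j, -, hj⟩ := Finset.exists_mem_eq_sup' hne (fun i => mu i + X i ω)
    calc |F ω| = |mu j + X j ω| := by
          show |univ.sup' hne (fun i => mu i + X i ω)| = _; rw [hj]
      _ ≤ ∑ i, |mu i + X i ω| :=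
          Finset.single_le_sum (f := fun i => |mu i + X i ω|)
            (fun i _ => abs_nonneg _) (Finset.mem_univ j)
      _ ≤ abs (∑ i, |mu i + X i ω|) := le_abs_self _
  -- pointwise bound
  set G : Ω → ℝ := fun ω =>
    (1 / t) * ((∑ i, Real.exp (t * (mu i + X i ω))) / S - 1 + Real.log S) with hGdef
  have hpt : ∀ ω, F ω ≤ G ω := by
    intro ω
    have hsumpos : 0 < ∑ i, Real.exp (t * (mu i + X i ω)) :=
      Finset.sum_pos (fun i _ => Real.exp_pos _) hne
    have h1 : F ω ≤ (1 / t) * Real.log (∑ i, Real.exp (t * (mu i + X i ω))) := by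
      rw [hF]
      refine Finset.sup'_le hne _ fun i _ => ?_
      have hle : Real.exp (t * (mu i + X i ω)) ≤ ∑ j, Real.exp (t * (mu j + X j ω)) :=
        Finset.single_le_sum (f := fun j => Real.exp (t * (mu j + X j ω)))
          (fun j _ => (Real.exp_pos _).le) (Finset.mem_univ i)
      have hlog : t * (mu i + X i ω) ≤ Real.log (∑ j, Real.exp (t * (mu j + X j ω))) := by
        have := Real.log_le_log (Real.exp_pos _) hle
        rwa [Real.log_exp] at this
      calc mu i + X i ω = (1 / t) * (t * (mu i + X i ω)) := by field_simp
        _ ≤ (1 / t) * Real.log (∑ j, Real.exp (t * (mu j + X j ω))) :=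
          mul_le_mul_of_nonneg_left hlog (by positivity)
    refine h1.trans ?_
    rw [hGdef]
    refine mul_le_mul_of_nonneg_left ?_ (by positivity)
    have hlog2 := Real.log_le_sub_one_of_pos
      (show 0 < (∑ i, Real.exp (t * (mu i + X i ω))) / S by positivity)
    rw [Real.log_div (ne_of_gt hsumpos) (ne_of_gt hSpos)] at hlog2
    linarith
  have hI1 : Integrable (fun ω => (∑ i, Real.exp (t * (mu i + X i ω))) / S - 1) μ := by
    exact (hintsum.div_const S).sub (integrable_const 1)
  have hI0 : Integrable (fun ω => (∑ i, Real.exp (t * (mu i + X i ω))) / S) μ := by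
    exact hintsum.div_const S
  have hGint : Integrable G μ := by
    refine (Integrable.const_mul ?_ _)
    exact hI1.add (integrable_const _)
  have hGval : ∫ ω, G ω ∂μ = (1 / t) * Real.log S := by
    rw [hGdef]
    simp only
    rw [integral_const_mul, integral_add hI1 (integrable_const (Real.log S)),
      integral_sub hI0 (integrable_const 1), integral_div, hintegralsum,
      integral_const, integral_const]
    simp [div_self (ne_of_gt hSpos)]
  calc -(∫ ω, h (xnext ω) ∂μ) = ∫ ω, F ω ∂μ := hLHS
    _ ≤ ∫ ω, G ω ∂μ := integral_mono hFint hGint hpt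
    _ = (1 / t) * Real.log S := hGval
end
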